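/- If G' is d-embedded in G (both 2-terminal directed graphs), then the parallel width of G is at least the parallel width of G', and the serial-parallel width of G is at least the serial-parallel width of G'. -/

import Mathlib

variable {V : Type*}

/-- `p` is a simple directed path in the edge relation `E`. -/
def IsDiPath (E : V → V → Prop) (p : List V) : Prop := p.Chain' E ∧ p.Nodup

/-- `p` is a simple directed path from `x` to `y`. -/
def PathFrom (E : V → V → Prop) (p : List V) (x y : V) : Prop :=
  IsDiPath E p ∧ p.head? = some x ∧ p.getLast? = some y

/-- the edge `(a,b)` is traversed by the path `p`. -/
def EdgeOn (a b : V) (p : List V) : Prop := (a, b) ∈ p.zip p.tail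

/-- directed reachability. -/
def Reach (E : V → V → Prop) : V → V → Prop := Relation.ReflTransGen E

/-- no directed cycles. -/
def Acyclic (E : V → V → Prop) : Prop := ∀ a b, E a b → ¬ Reach E b a

/-- 2-terminal graph (edge version): no self-loops, some `s`-`t` path exists and
every edge lies on a simple `s`-`t` path. -/
def TwoTerminalE (E : V → V → Prop) (s t : V) : Prop :=
  (∀ v, ¬ E v v) ∧ (∃ p, PathFrom E p s t) ∧
  ∀ a b, E a b → ∃ p, PathFrom E p s t ∧ EdgeOn a b p

/-- 2-terminal graph (full version): no self-loops and every vertex and edge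
lies on a simple `s`-`t` path. -/
def TwoTerminalF (E : V → V → Prop) (s t : V) : Prop :=
  (∀ v, ¬ E v v) ∧ (∀ v, ∃ p, PathFrom E p s t ∧ v ∈ p) ∧
  ∀ a b, E a b → ∃ p, PathFrom E p s t ∧ EdgeOn a b p

/-- `C` is an `s`-`t` edge cut. -/
def IsCut (E : V → V → Prop) (s t : V) (C : Set (V × V)) : Prop :=
  (∀ e ∈ C, E e.1 e.2) ∧ ¬ ∃ p, PathFrom (fun a b => E a b ∧ (a, b) ∉ C) p s t

def IsMinCut (E : V → V → Prop) (s t : V) (C : Set (V × V)) : Prop :=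
  IsCut E s t C ∧ ∀ C' ⊂ C, ¬ IsCut E s t C'

/-- `S` is parallel: contained in some minimal `s`-`t` cut. -/
def Parallel (E : V → V → Prop) (s t : V) (S : Set (V × V)) : Prop :=
  ∃ C, IsMinCut E s t C ∧ S ⊆ C

/-- `S` is serial: contained in a simple directed `s`-`t` path. -/
def Serial (E : V → V → Prop) (s t : V) (S : Set (V × V)) : Prop :=
  ∃ p, PathFrom E p s t ∧ ∀ e ∈ S, EdgeOn e.1 e.2 p

/-- Forward split of node `a` into `a, b` with new edge `(a,b)`: `a` keeps all incoming
edges, `b` takes the outgoing edges in `Out` (nonempty), `a` keeps the rest.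
`b` must be a fresh (isolated) vertex of the original graph `E`; `E₂` is the result. -/
def ForwardSplit (E E₂ : V → V → Prop) (a b : V) (Out : Set V) : Prop :=
  (∀ v, ¬ E b v ∧ ¬ E v b) ∧ a ≠ b ∧ Out.Nonempty ∧ (∀ v ∈ Out, E a v) ∧ b ∉ Out ∧
  ∀ u v, E₂ u v ↔ ((u = a ∧ v = b) ∨ (u = b ∧ v ∈ Out) ∨
    (u = a ∧ v ∉ Out ∧ v ≠ b ∧ E a v) ∨ (u ≠ a ∧ u ≠ b ∧ v ≠ b ∧ E u v))

/-- Backward split of node `b` into `a, b` with new edge `(a,b)`: `b` keeps all outgoing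
edges, `a` takes the incoming edges in `In` (nonempty), `b` keeps the rest.
`a` must be a fresh (isolated) vertex of the original graph `E`; `E₂` is the result. -/
def BackwardSplit (E E₂ : V → V → Prop) (a b : V) (In : Set V) : Prop :=
  (∀ v, ¬ E a v ∧ ¬ E v a) ∧ a ≠ b ∧ In.Nonempty ∧ (∀ u ∈ In, E u b) ∧ a ∉ In ∧
  ∀ u v, E₂ u v ↔ ((u = a ∧ v = b) ∨ (u ∈ In ∧ v = a) ∨
    (u ∉ In ∧ u ≠ a ∧ v = b ∧ E u b) ∨ (u ≠ a ∧ v ≠ a ∧ v ≠ b ∧ E u v))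

/-- Addition of a new edge `(a,b)` such that there is no path from `b` to `a`. -/
def AddEdgeStep (E E₂ : V → V → Prop) : Prop :=
  ∃ a b, ¬ Reach E b a ∧ ∀ u v, E₂ u v ↔ (E u v ∨ (u = a ∧ v = b))

/-- A single d-embedding operation (for 2-terminal graphs with terminals `s`, `t`). -/
def DEmbedStep (s t : V) (E E₂ : V → V → Prop) : Prop :=
  AddEdgeStep E E₂ ∨ (∃ a b Out, a ≠ t ∧ ForwardSplit E E₂ a b Out) ∨
    (∃ a b In, b ≠ s ∧ BackwardSplit E E₂ a b In)

/-- `G'` is d-embedded in `G` if `G` is obtained from `G'` by a sequence of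
d-embedding operations. -/
def DEmbedded (s t : V) (E' E : V → V → Prop) : Prop :=
  Relation.ReflTransGen (DEmbedStep s t) E' E


namespace Work
open List

lemma chain'_cons {R : V → V → Prop} {x y : V} {l : List V} :
    List.Chain' R (x :: y :: l) ↔ R x y ∧ List.Chain' R (y :: l) := List.isChain_cons_cons
lemma chain'_append {R : V → V → Prop} {l₁ l₂ : List V} :
    List.Chain' R (l₁ ++ l₂) ↔ List.Chain' R l₁ ∧ List.Chain' R l₂ ∧
      ∀ x ∈ l₁.getLast?, ∀ y ∈ l₂.head?, R x y := List.isChain_append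
lemma chain'_nil {R : V → V → Prop} : List.Chain' R [] := List.isChain_nil
lemma chain'_singleton {R : V → V → Prop} (x : V) : List.Chain' R [x] := List.isChain_singleton x
lemma chain'_imp {R S : V → V → Prop} (H : ∀ a b, R a b → S a b) {l : List V}
    (h : List.Chain' R l) : List.Chain' S l := List.IsChain.imp (fun a b => H a b) h
lemma chain'_reverse {R : V → V → Prop} {l : List V} :
    List.Chain' R l.reverse ↔ List.Chain' (fun a b => R b a) l := List.isChain_reverse

def ze (p : List V) : List (V × V) := p.zip p.tail

@[simp] lemma ze_nil : ze ([] : List V) = [] := rfl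
@[simp] lemma ze_single (x : V) : ze [x] = [] := rfl
@[simp] lemma ze_cons_cons (x y : V) (r : List V) : ze (x :: y :: r) = (x, y) :: ze (y :: r) := rfl

lemma edgeOn_iff {u v : V} {p : List V} : EdgeOn u v p ↔ (u, v) ∈ ze p := Iff.rfl

lemma chain'_iff_ze {R : V → V → Prop} : ∀ (p : List V), p.Chain' R ↔ ∀ e ∈ ze p, R e.1 e.2
  | [] => by simp [List.Chain']
  | [x] => by simp [List.Chain']
  | x :: y :: r => by
    rw [chain'_cons, chain'_iff_ze (y :: r), ze_cons_cons]
    constructor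
    · rintro ⟨h1, h2⟩ e he
      rcases List.mem_cons.1 he with rfl | he
      · exact h1
      · exact h2 e he
    · intro h
      exact ⟨h _ (List.mem_cons_self), fun e he => h e (List.mem_cons_of_mem _ he)⟩

lemma mem_of_mem_ze {e : V × V} {p : List V} (h : e ∈ ze p) : e.1 ∈ p ∧ e.2 ∈ p := by
  obtain ⟨h1, h2⟩ := List.of_mem_zip (show (e.1, e.2) ∈ p.zip p.tail from h)
  exact ⟨h1, List.mem_of_mem_tail h2⟩

lemma ze_subset_cons {x : V} {l : List V} : ∀ e ∈ ze l, e ∈ ze (x :: l) := by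
  cases l with
  | nil => simp
  | cons y r => intro e he; rw [ze_cons_cons]; exact List.mem_cons_of_mem _ he

lemma mem_ze_iff {e : V × V} : ∀ {p : List V}, e ∈ ze p ↔ ∃ l₁ l₂, p = l₁ ++ e.1 :: e.2 :: l₂ := by
  intro p
  induction p with
  | nil => simp [eq_comm, List.append_eq_nil_iff]
  | cons x l ih =>
    cases l with
    | nil =>
      simp only [ze_single, List.not_mem_nil, false_iff, not_exists]
      rintro l₁ l₂ h
      rcases l₁ with _ | ⟨u, l₁⟩ <;> simp_all
    | cons y r =>
      rw [ze_cons_cons]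
      constructor
      · intro h
        rcases List.mem_cons.1 h with h | h
        · exact ⟨[], r, by simp [h]⟩
        · obtain ⟨l₁, l₂, hl⟩ := ih.1 h
          exact ⟨x :: l₁, l₂, by simp [hl]⟩
      · rintro ⟨l₁, l₂, hl⟩
        rcases l₁ with _ | ⟨u, l₁⟩
        · simp only [List.nil_append, List.cons.injEq] at hl
          obtain ⟨h1, h2, _⟩ := hl
          have : e = (x, y) := by
            obtain ⟨e1, e2⟩ := e; simp_all
          rw [this]; exact List.mem_cons_self
        · simp only [List.cons_append, List.cons.injEq] at hl
          obtain ⟨rfl, hl⟩ := hl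
          exact List.mem_cons_of_mem _ (ih.2 ⟨l₁, l₂, hl⟩)

lemma ze_append' : ∀ (l₁ : List V) (x : V) (l₂ : List V),
    ze (l₁ ++ x :: l₂) = ze (l₁ ++ [x]) ++ ze (x :: l₂) := by
  intro l₁
  induction l₁ with
  | nil => simp
  | cons u l₁ ih =>
    intro x l₂
    cases l₁ with
    | nil => simp
    | cons v l₁' =>
      simp only [List.cons_append, ze_cons_cons]
      rw [← List.cons_append, ih x l₂]
      simp

lemma ze_concat (l : List V) (x y : V) : ze (l ++ [x, y]) = ze (l ++ [x]) ++ [(x, y)] := by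
  have := ze_append' l x [y]
  simpa using this

section Paths
variable {E : V → V → Prop} {s t x y z : V} {C C' C₀ : Set (V × V)} {p : List V}

lemma pathFrom_imp {R R' : V → V → Prop} (h : ∀ u v, R u v → R' u v) {p : List V} {x y : V}
    (hp : PathFrom R p x y) : PathFrom R' p x y :=
  ⟨⟨chain'_imp h hp.1.1, hp.1.2⟩, hp.2⟩

lemma pathFrom_head_mem (hp : PathFrom E p x y) : x ∈ p :=
  List.mem_of_mem_head? (by rw [hp.2.1]; exact rfl)

lemma mem_of_getLast? {l : List V} {a : V} (h : l.getLast? = some a) : a ∈ l := by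
  cases l with
  | nil => simp at h
  | cons u l =>
    rw [List.getLast?_eq_getLast (l := u :: l) (by simp)] at h
    rw [← Option.some_inj.1 h]
    exact List.getLast_mem _

lemma pathFrom_last_mem (hp : PathFrom E p x y) : y ∈ p := mem_of_getLast? hp.2.2

lemma pathFrom_two (hp : PathFrom E p x y) (hxy : x ≠ y) : ∃ u v r, p = u :: v :: r := by
  rcases p with _ | ⟨u, _ | ⟨v, r⟩⟩
  · simp [PathFrom] at hp
  · exfalso; apply hxy
    have h1 := hp.2.1; have h2 := hp.2.2
    simp [List.getLast?_singleton] at h1 h2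
    rw [← h1, ← h2]
  · exact ⟨u, v, r, rfl⟩

lemma chain'_reach_last {R : V → V → Prop} :
    ∀ {p : List V}, p.Chain' R → ∀ {x : V}, x ∈ p → ∀ {z : V}, p.getLast? = some z →
      Relation.ReflTransGen R x z := by
  intro p
  induction p with
  | nil => intro _ x hx; simp at hx
  | cons u l ih =>
    intro hc x hx z hz
    rcases List.mem_cons.1 hx with rfl | hx
    · cases l with
      | nil =>
        simp [List.getLast?_singleton] at hz
        rw [hz]
      | cons v r =>
        have h1 : R x v := (chain'_cons.1 hc).1
        have h2 : Relation.ReflTransGen R v z := by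
          apply ih (chain'_cons.1 hc).2 (List.mem_cons_self)
          rw [← hz]
          exact (List.getLast?_cons_cons ..).symm
        exact Relation.ReflTransGen.head h1 h2
    · cases l with
      | nil => simp at hx
      | cons v r =>
        apply ih (chain'_cons.1 hc).2 hx
        rw [← hz]
        exact (List.getLast?_cons_cons ..).symm

lemma chain'_reach_head {R : V → V → Prop} :
    ∀ {p : List V}, p.Chain' R → ∀ {x : V}, p.head? = some x → ∀ {z : V}, z ∈ p →
      Relation.ReflTransGen R x z := by
  intro p
  induction p with
  | nil => intro _ x hx; simp at hx
  | cons u l ih =>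
    intro hc x hx z hz
    have hxu : x = u := by simpa using hx.symm
    subst hxu
    rcases List.mem_cons.1 hz with rfl | hz
    · exact Relation.ReflTransGen.refl
    · cases l with
      | nil => simp at hz
      | cons v r =>
        have h1 : R x v := (chain'_cons.1 hc).1
        have h2 := ih (chain'_cons.1 hc).2 rfl hz
        exact Relation.ReflTransGen.head h1 h2

lemma not_nodup_decomp : ∀ {l : List V}, ¬ l.Nodup → ∃ l₁ x l₂ l₃, l = l₁ ++ x :: l₂ ++ x :: l₃ := by
  intro l
  induction l with
  | nil => intro h; exact absurd List.nodup_nil h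
  | cons u l ih =>
    intro h
    by_cases hu : u ∈ l
    · obtain ⟨s, t, rfl⟩ := List.append_of_mem hu
      exact ⟨[], u, s, t, by simp⟩
    · have : ¬ l.Nodup := fun hn => h (List.nodup_cons.2 ⟨hu, hn⟩)
      obtain ⟨l₁, x, l₂, l₃, rfl⟩ := ih this
      exact ⟨u :: l₁, x, l₂, l₃, by simp⟩

lemma chain'_surgery {R : V → V → Prop} {l₁ l₂ l₃ : List V} {x : V}
    (h : List.Chain' R (l₁ ++ x :: l₂ ++ x :: l₃)) : List.Chain' R (l₁ ++ x :: l₃) := by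
  have h' : List.Chain' R (l₁ ++ ((x :: l₂) ++ (x :: l₃))) := by simpa using h
  rw [chain'_append] at h'
  obtain ⟨hc1, hc2, hlink⟩ := h'
  rw [chain'_append] at hc2
  rw [chain'_append]
  refine ⟨hc1, hc2.2.1, ?_⟩
  intro u hu v hv
  apply hlink u hu
  simpa using hv

lemma exists_nodup_path_aux {R : V → V → Prop} :
    ∀ (n : ℕ) (p : List V), p.length ≤ n → p.Chain' R → p.head? = some x → p.getLast? = some z →
      ∃ q, PathFrom R q x z := by
  intro n
  induction n with
  | zero => intro p hl _ hh _; cases p <;> simp_all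
  | succ n ih =>
    intro p hl hc hh hz
    by_cases hnd : p.Nodup
    · exact ⟨p, ⟨hc, hnd⟩, hh, hz⟩
    · obtain ⟨l₁, w, l₂, l₃, rfl⟩ := not_nodup_decomp hnd
      apply ih (l₁ ++ w :: l₃)
      · have := hl
        simp only [List.length_append, List.length_cons] at *
        omega
      · exact chain'_surgery hc
      · rw [← hh]
        cases l₁ <;> simp
      · rw [← hz]
        rw [show l₁ ++ w :: l₂ ++ w :: l₃ = (l₁ ++ w :: l₂) ++ (w :: l₃) by simp]
        rw [List.getLast?_append_of_ne_nil _ (by simp),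
          List.getLast?_append_of_ne_nil _ (by simp)]

lemma reach_to_path {R : V → V → Prop} (h : Relation.ReflTransGen R x z) :
    ∃ p, PathFrom R p x z := by
  have key : ∃ p : List V, p.Chain' R ∧ p.head? = some x ∧ p.getLast? = some z := by
    induction h with
    | refl => exact ⟨[x], chain'_singleton _, rfl, List.getLast?_singleton⟩
    | tail hab hbc ihp =>
      obtain ⟨p, hc, hh, hz⟩ := ihp
      refine ⟨p ++ [_], ?_, ?_, List.getLast?_concat⟩
      · rw [chain'_append]
        refine ⟨hc, chain'_singleton _, ?_⟩
        intro u hu v hv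
        rw [hz, Option.mem_def, Option.some_inj] at hu
        rw [List.head?_cons, Option.mem_def, Option.some_inj] at hv
        subst hu; subst hv
        exact hbc
      · cases p with
        | nil => simp at hh
        | cons u l => simpa using hh
  obtain ⟨p, hc, hh, hz⟩ := key
  exact exists_nodup_path_aux p.length p le_rfl hc hh hz

lemma chain'_reach {R : V → V → Prop} (hc : p.Chain' R) (hh : p.head? = some x)
    (hz : p.getLast? = some z) : Relation.ReflTransGen R x z :=
  chain'_reach_last hc (List.mem_of_mem_head? (by rw [hh]; rfl)) hz

end Paths

section Cuts
variable {E : V → V → Prop} {s t : V} {C C' C₀ : Set (V × V)}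

lemma IsCut.ne_st (h : IsCut E s t C) : s ≠ t := by
  rintro rfl
  exact h.2 ⟨[s], ⟨⟨chain'_singleton _, List.nodup_singleton _⟩, rfl,
    List.getLast?_singleton⟩⟩

lemma isCut_full (hst : s ≠ t) : IsCut E s t {e | E e.1 e.2} := by
  refine ⟨fun e he => he, ?_⟩
  rintro ⟨p, hp⟩
  obtain ⟨u, v, r, rfl⟩ := pathFrom_two hp hst
  have := (chain'_cons.1 hp.1.1).1
  exact this.2 this.1

lemma chain_avoid : ∀ (l : List (V × V)) (c : Set (Set (V × V))), c.Nonempty →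
    IsChain (· ⊆ ·) c → (∀ e ∈ l, ∃ C ∈ c, e ∉ C) → ∃ C ∈ c, ∀ e ∈ l, e ∉ C := by
  intro l
  induction l with
  | nil => intro c hc _ _; exact ⟨hc.some, hc.some_mem, by simp⟩
  | cons f l ih =>
    intro c hc hchain hall
    obtain ⟨C₁, hC₁, h1⟩ := ih c hc hchain (fun e he => hall e (List.mem_cons_of_mem _ he))
    obtain ⟨C₂, hC₂, h2⟩ := hall f (List.mem_cons_self)
    rcases eq_or_ne C₁ C₂ with rfl | hne
    · exact ⟨C₁, hC₁, fun e he => by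
        rcases List.mem_cons.1 he with rfl | he
        · exact h2
        · exact h1 e he⟩
    · rcases hchain hC₁ hC₂ hne with hsub | hsub
      · refine ⟨C₁, hC₁, fun e he => ?_⟩
        rcases List.mem_cons.1 he with rfl | he
        · exact fun hmem => h2 (hsub hmem)
        · exact h1 e he
      · refine ⟨C₂, hC₂, fun e he => ?_⟩
        rcases List.mem_cons.1 he with rfl | he
        · exact h2
        · exact fun hmem => h1 e he (hsub hmem)

lemma exists_minCut_subset (h : IsCut E s t C₀) : ∃ C, IsMinCut E s t C ∧ C ⊆ C₀ := by
  obtain ⟨m, hm⟩ := zorn_superset {C | IsCut E s t C ∧ C ⊆ C₀} (by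
    intro c hcS hchain
    rcases c.eq_empty_or_nonempty with rfl | hne
    · exact ⟨C₀, ⟨h, subset_rfl⟩, by simp⟩
    · refine ⟨⋂₀ c, ⟨⟨?_, ?_⟩, ?_⟩, fun s hs => Set.sInter_subset_of_mem hs⟩
      · intro e he
        exact (hcS hne.some_mem).1.1 e (he _ hne.some_mem)
      · rintro ⟨p, hp⟩
        have hc : p.Chain' E := chain'_imp (fun u v h => h.1) hp.1.1
        have havoid : ∀ e ∈ ze p, e ∉ ⋂₀ c := by
          intro e he
          have := (chain'_iff_ze p).1 hp.1.1 e he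
          exact this.2
        obtain ⟨C, hCc, hCa⟩ := chain_avoid (ze p) c hne hchain (by
          intro e he
          have := havoid e he
          simp only [Set.mem_sInter, not_forall] at this
          obtain ⟨C, hC, he'⟩ := this
          exact ⟨C, hC, he'⟩)
        apply (hcS hCc).1.2
        refine ⟨p, ⟨⟨?_, hp.1.2⟩, hp.2⟩⟩
        rw [chain'_iff_ze]
        intro e he
        exact ⟨(chain'_iff_ze p).1 hc e he, hCa e he⟩
      · exact (Set.sInter_subset_of_mem hne.some_mem).trans (hcS hne.some_mem).2)
  refine ⟨m, ⟨hm.prop.1, ?_⟩, hm.prop.2⟩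
  intro C' hss hcut'
  have hC'S : C' ∈ {C | IsCut E s t C ∧ C ⊆ C₀} := ⟨hcut', hss.subset.trans hm.prop.2⟩
  exact absurd (hm.le_of_le hC'S hss.subset) (not_le_of_gt hss)

lemma isMinCut_of_witness (hcut : IsCut E s t C)
    (hw : ∀ e ∈ C, ∃ p, PathFrom (fun u v => E u v ∧ (u, v) ∉ C \ {e}) p s t) :
    IsMinCut E s t C := by
  refine ⟨hcut, ?_⟩
  intro C' hss hcut'
  obtain ⟨e, heC, heC'⟩ := Set.exists_of_ssubset hss
  obtain ⟨p, hp⟩ := hw e heC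
  apply hcut'.2
  refine ⟨p, pathFrom_imp ?_ hp⟩
  rintro u v ⟨hE, hne⟩
  refine ⟨hE, fun hmem => ?_⟩
  apply hne
  refine ⟨hss.subset hmem, ?_⟩
  rintro rfl
  exact heC' hmem

lemma IsMinCut.witness (h : IsMinCut E s t C) {e : V × V} (he : e ∈ C) :
    ∃ p, PathFrom (fun u v => E u v ∧ (u, v) ∉ C \ {e}) p s t := by
  have hss : C \ {e} ⊂ C := Set.sdiff_singleton_ssubset.2 he
  have := h.2 _ hss
  rw [IsCut] at this
  push_neg at this
  exact this (fun f hf => h.1.1 f hf.1)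

lemma IsMinCut.exists_path (h : IsMinCut E s t C) (hne : C.Nonempty) :
    ∃ p, PathFrom E p s t := by
  obtain ⟨e, he⟩ := hne
  obtain ⟨p, hp⟩ := IsMinCut.witness h he
  exact ⟨p, pathFrom_imp (fun u v h => h.1) hp⟩

lemma exists_minCut (hst : s ≠ t) : ∃ C, IsMinCut E s t C := by
  obtain ⟨C, hC, _⟩ := exists_minCut_subset (isCut_full hst (E := E))
  exact ⟨C, hC⟩

lemma isMinCut_congr {F : V → V → Prop} (hEF : ∀ u v, E u v ↔ F u v)
    (h : IsMinCut E s t C) : IsMinCut F s t C := by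
  have key : ∀ (D : Set (V × V)), IsCut E s t D ↔ IsCut F s t D := by
    intro D
    constructor <;> intro hD <;>
      refine ⟨fun e he => ?_, fun ⟨p, hp⟩ => hD.2 ⟨p, pathFrom_imp ?_ hp⟩⟩
    · exact (hEF _ _).1 (hD.1 e he)
    · rintro u v ⟨h1, h2⟩; exact ⟨(hEF _ _).2 h1, h2⟩
    · exact (hEF _ _).2 (hD.1 e he)
    · rintro u v ⟨h1, h2⟩; exact ⟨(hEF _ _).1 h1, h2⟩
  exact ⟨(key C).1 h.1, fun C' hss hcut' => h.2 C' hss ((key C').2 hcut')⟩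

end Cuts

section FSplit
variable {E E₂ : V → V → Prop} {s t a b : V} {Out : Set V}

open Classical in
noncomputable def fsMap (a b : V) (Out : Set V) (e : V × V) : V × V :=
  if e.1 = a ∧ e.2 ∈ Out then (b, e.2) else e

open Classical in
noncomputable def fsPath (a b : V) (Out : Set V) : List V → List V
  | [] => []
  | [x] => [x]
  | x :: y :: rest =>
    if x = a ∧ y ∈ Out then x :: b :: fsPath a b Out (y :: rest)
    else x :: fsPath a b Out (y :: rest)

lemma fsPath_nil : fsPath a b Out [] = [] := by simp only [fsPath]
lemma fsPath_single (x : V) : fsPath a b Out [x] = [x] := by simp only [fsPath]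
open Classical in
lemma fsPath_cons_cons (x y : V) (r : List V) :
    fsPath a b Out (x :: y :: r) =
      if x = a ∧ y ∈ Out then x :: b :: fsPath a b Out (y :: r)
      else x :: fsPath a b Out (y :: r) := by simp only [fsPath]

lemma fsPath_shape (y : V) (r : List V) : ∃ w, fsPath a b Out (y :: r) = y :: w := by
  cases r with
  | nil => exact ⟨[], fsPath_single y⟩
  | cons z r' =>
    rw [fsPath_cons_cons]
    split
    · exact ⟨_, rfl⟩
    · exact ⟨_, rfl⟩

section hF
variable (hF : ForwardSplit E E₂ a b Out)
include hF

lemma fs_ab : a ≠ b := hF.2.1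
lemma fs_E2_ab : E₂ a b := (hF.2.2.2.2.2 a b).2 (Or.inl ⟨rfl, rfl⟩)
lemma fs_E2_bv {v : V} (hv : v ∈ Out) : E₂ b v :=
  (hF.2.2.2.2.2 b v).2 (Or.inr (Or.inl ⟨rfl, hv⟩))
lemma fs_E_of_E2 {u v : V} (h : E₂ u v) (hub : u ≠ b) (hvb : v ≠ b) : E u v := by
  rcases (hF.2.2.2.2.2 u v).1 h with ⟨_, rfl⟩ | ⟨rfl, _⟩ | ⟨rfl, _, _, h⟩ | ⟨_, _, _, h⟩
  · exact absurd rfl hvb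
  · exact absurd rfl hub
  · exact h
  · exact h
lemma fs_pred_b {u : V} (h : E₂ u b) : u = a := by
  rcases (hF.2.2.2.2.2 u b).1 h with ⟨rfl, _⟩ | ⟨rfl, hb⟩ | ⟨rfl, _, hb, _⟩ | ⟨_, _, hb, _⟩
  · rfl
  · exact absurd hb hF.2.2.2.2.1
  · exact absurd rfl hb
  · exact absurd rfl hb
lemma fs_succ_b {v : V} (h : E₂ b v) : v ∈ Out := by
  rcases (hF.2.2.2.2.2 b v).1 h with ⟨hba, _⟩ | ⟨_, hv⟩ | ⟨hba, _⟩ | ⟨_, hb, _⟩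
  · exact absurd hba hF.2.1.symm
  · exact hv
  · exact absurd hba hF.2.1.symm
  · exact absurd rfl hb
lemma fs_not_E2_a_out {v : V} (hv : v ∈ Out) : ¬ E₂ a v := by
  intro h
  rcases (hF.2.2.2.2.2 a v).1 h with ⟨_, rfl⟩ | ⟨hba, _⟩ | ⟨_, hv', _⟩ | ⟨ha, _⟩
  · exact hF.2.2.2.2.1 hv
  · exact hF.2.1 hba
  · exact hv' hv
  · exact ha rfl

lemma fs_E_edge_not_b {u v : V} (h : E u v) : u ≠ b ∧ v ≠ b := by
  constructor
  · rintro rfl; exact (hF.1 v).1 h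
  · rintro rfl; exact (hF.1 u).2 h

omit hF

lemma mem_has_edge {R : V → V → Prop} :
    ∀ {p : List V}, p.Chain' R → 2 ≤ p.length → ∀ v ∈ p, ∃ w, R v w ∨ R w v := by
  intro p
  induction p with
  | nil => simp
  | cons x l ih =>
    intro hc hlen v hv
    cases l with
    | nil => simp at hlen
    | cons y r =>
      have h1 : R x y := (chain'_cons.1 hc).1
      rcases List.mem_cons.1 hv with rfl | hv
      · exact ⟨y, Or.inl h1⟩
      · rcases List.mem_cons.1 hv with rfl | hv
        · exact ⟨x, Or.inr h1⟩
        · cases r with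
          | nil => simp at hv
          | cons z r' =>
            exact ih (chain'_cons.1 hc).2 (by simp) v (List.mem_cons_of_mem _ hv)

include hF

lemma fs_b_not_mem {p : List V} (hc : p.Chain' E) (hlen : 2 ≤ p.length) : b ∉ p := by
  intro hb
  obtain ⟨w, hw | hw⟩ := mem_has_edge hc hlen b hb
  · exact (hF.1 w).1 hw
  · exact (hF.1 w).2 hw

omit hF

lemma fsPath_head : ∀ (p : List V), (fsPath a b Out p).head? = p.head? := by
  intro p
  rcases p with _ | ⟨x, _ | ⟨y, r⟩⟩
  · rw [fsPath_nil]
  · rw [fsPath_single]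
  · rw [fsPath_cons_cons]; split <;> rfl

lemma fsPath_last : ∀ (p : List V), (fsPath a b Out p).getLast? = p.getLast? := by
  intro p
  induction p with
  | nil => rw [fsPath_nil]
  | cons x l ih =>
    cases l with
    | nil => rw [fsPath_single]
    | cons y r =>
      obtain ⟨w, hw⟩ := fsPath_shape (a := a) (b := b) (Out := Out) y r
      rw [fsPath_cons_cons]
      split
      · rw [hw, List.getLast?_cons_cons, List.getLast?_cons_cons, ← hw, ih,
          List.getLast?_cons_cons]
      · rw [hw, List.getLast?_cons_cons, ← hw, ih, List.getLast?_cons_cons]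

lemma fsPath_mem : ∀ {p : List V} {v : V}, v ∈ fsPath a b Out p → v ∈ p ∨ (v = b ∧ a ∈ p) := by
  intro p
  induction p with
  | nil => rw [fsPath_nil]; simp
  | cons x l ih =>
    intro v hv
    cases l with
    | nil => rw [fsPath_single] at hv; exact Or.inl hv
    | cons y r =>
      rw [fsPath_cons_cons] at hv
      split at hv
      · rename_i hxy
        rcases List.mem_cons.1 hv with rfl | hv
        · exact Or.inl (List.mem_cons_self)
        · rcases List.mem_cons.1 hv with rfl | hv
          · exact Or.inr ⟨rfl, by rw [hxy.1]; exact List.mem_cons_self⟩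
          · rcases ih hv with h | ⟨rfl, ha⟩
            · exact Or.inl (List.mem_cons_of_mem _ h)
            · exact Or.inr ⟨rfl, List.mem_cons_of_mem _ ha⟩
      · rcases List.mem_cons.1 hv with rfl | hv
        · exact Or.inl (List.mem_cons_self)
        · rcases ih hv with h | ⟨rfl, ha⟩
          · exact Or.inl (List.mem_cons_of_mem _ h)
          · exact Or.inr ⟨rfl, List.mem_cons_of_mem _ ha⟩

include hF

lemma fsPath_chain : ∀ {p : List V}, b ∉ p → p.Chain' E → (fsPath a b Out p).Chain' E₂ := by
  intro p
  induction p with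
  | nil => intro _ _; rw [fsPath_nil]; exact chain'_nil
  | cons x l ih =>
    intro hbp hc
    cases l with
    | nil => rw [fsPath_single]; exact chain'_singleton _
    | cons y r =>
      have hxy : E x y := (chain'_cons.1 hc).1
      have hrest := ih (fun h => hbp (List.mem_cons_of_mem _ h)) (chain'_cons.1 hc).2
      obtain ⟨w, hw⟩ := fsPath_shape (a := a) (b := b) (Out := Out) y r
      rw [fsPath_cons_cons]
      split
      · rename_i hcond
        rw [hw] at hrest ⊢
        exact chain'_cons.2 ⟨by rw [hcond.1]; exact fs_E2_ab hF,
          chain'_cons.2 ⟨fs_E2_bv hF hcond.2, hrest⟩⟩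
      · rename_i hcond
        rw [hw] at hrest ⊢
        refine chain'_cons.2 ⟨?_, hrest⟩
        by_cases hxa : x = a
        · subst hxa
          have hyOut : y ∉ Out := fun h => hcond ⟨rfl, h⟩
          refine (hF.2.2.2.2.2 x y).2 (Or.inr (Or.inr (Or.inl ⟨rfl, hyOut, ?_, hxy⟩)))
          rintro rfl; exact hbp (List.mem_cons_of_mem _ (List.mem_cons_self))
        · refine (hF.2.2.2.2.2 x y).2 (Or.inr (Or.inr (Or.inr ⟨hxa, ?_, ?_, hxy⟩)))
          · rintro rfl; exact hbp (List.mem_cons_self)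
          · rintro rfl; exact hbp (List.mem_cons_of_mem _ (List.mem_cons_self))

omit hF

lemma fsPath_nodup : ∀ {p : List V}, b ∉ p → p.Nodup → (fsPath a b Out p).Nodup := by
  intro p
  induction p with
  | nil => intro _ _; rw [fsPath_nil]; exact List.nodup_nil
  | cons x l ih =>
    intro hbp hnd
    cases l with
    | nil => rw [fsPath_single]; exact List.nodup_singleton _
    | cons y r =>
      have hxl : x ∉ y :: r := (List.nodup_cons.1 hnd).1
      have hbl : b ∉ y :: r := fun h => hbp (List.mem_cons_of_mem _ h)
      have hxb : x ≠ b := fun h => hbp (h ▸ List.mem_cons_self)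
      have hrest := ih hbl (List.nodup_cons.1 hnd).2
      rw [fsPath_cons_cons]
      split
      · rename_i hcond
        refine List.nodup_cons.2 ⟨?_, List.nodup_cons.2 ⟨?_, hrest⟩⟩
        · intro hx
          rcases List.mem_cons.1 hx with h | hx
          · exact hxb h
          · rcases fsPath_mem hx with h | ⟨h, _⟩
            · exact hxl h
            · exact hxb h
        · intro hb
          rcases fsPath_mem hb with h | ⟨_, ha⟩
          · exact hbl h
          · rw [← hcond.1] at ha; exact hxl ha
      · refine List.nodup_cons.2 ⟨?_, hrest⟩
        intro hx
        rcases fsPath_mem hx with h | ⟨h, _⟩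
        · exact hxl h
        · exact hxb h

lemma fsPath_ze_mem : ∀ {p : List V} {e : V × V}, e ∈ ze p →
    fsMap a b Out e ∈ ze (fsPath a b Out p) := by
  intro p
  induction p with
  | nil => simp
  | cons x l ih =>
    intro e he
    cases l with
    | nil => simp at he
    | cons y r =>
      obtain ⟨w, hw⟩ := fsPath_shape (a := a) (b := b) (Out := Out) y r
      rw [ze_cons_cons] at he
      rw [fsPath_cons_cons]
      split
      · rename_i hcond
        rw [hw, ze_cons_cons, ze_cons_cons]
        rcases List.mem_cons.1 he with rfl | he
        · have hmap : fsMap a b Out (x, y) = (b, y) := by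
            simp only [fsMap]; rw [if_pos hcond]
          rw [hmap]
          exact List.mem_cons_of_mem _ (List.mem_cons_self)
        · have := ih he
          rw [hw] at this
          exact List.mem_cons_of_mem _ (List.mem_cons_of_mem _ this)
      · rename_i hcond
        rw [hw, ze_cons_cons]
        rcases List.mem_cons.1 he with rfl | he
        · have hmap : fsMap a b Out (x, y) = (x, y) := by
            simp only [fsMap]; rw [if_neg hcond]
          rw [hmap]; exact List.mem_cons_self
        · have := ih he
          rw [hw] at this
          exact List.mem_cons_of_mem _ this

lemma fsPath_ze_sub : ∀ {p : List V} {e : V × V}, e ∈ ze (fsPath a b Out p) →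
    e = (a, b) ∨ ∃ e' ∈ ze p, e = fsMap a b Out e' := by
  intro p
  induction p with
  | nil => rw [fsPath_nil]; simp
  | cons x l ih =>
    intro e he
    cases l with
    | nil => rw [fsPath_single] at he; simp at he
    | cons y r =>
      obtain ⟨w, hw⟩ := fsPath_shape (a := a) (b := b) (Out := Out) y r
      rw [fsPath_cons_cons] at he
      split at he
      · rename_i hcond
        rw [hw, ze_cons_cons, ze_cons_cons] at he
        rcases List.mem_cons.1 he with rfl | he
        · exact Or.inl (by rw [hcond.1])
        · rcases List.mem_cons.1 he with rfl | he
          · refine Or.inr ⟨(x, y), List.mem_cons_self, ?_⟩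
            simp only [fsMap]; rw [if_pos hcond]
          · rw [← hw] at he
            rcases ih he with h | ⟨e', he', heq⟩
            · exact Or.inl h
            · exact Or.inr ⟨e', ze_subset_cons _ he', heq⟩
      · rename_i hcond
        rw [hw, ze_cons_cons] at he
        rcases List.mem_cons.1 he with rfl | he
        · refine Or.inr ⟨(x, y), List.mem_cons_self, ?_⟩
          simp only [fsMap]; rw [if_neg hcond]
        · rw [← hw] at he
          rcases ih he with h | ⟨e', he', heq⟩
          · exact Or.inl h
          · exact Or.inr ⟨e', ze_subset_cons _ he', heq⟩

include hF

lemma fsPathFrom {p : List V} {x y : V} (hbp : b ∉ p) (hp : PathFrom E p x y) :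
    PathFrom E₂ (fsPath a b Out p) x y :=
  ⟨⟨fsPath_chain hF hbp hp.1.1, fsPath_nodup hbp hp.1.2⟩,
    by rw [fsPath_head]; exact hp.2.1, by rw [fsPath_last]; exact hp.2.2⟩

lemma fsMap_injOn : ∀ e₁ e₂ : V × V, E e₁.1 e₁.2 → E e₂.1 e₂.2 →
    fsMap a b Out e₁ = fsMap a b Out e₂ → e₁ = e₂ := by
  rintro ⟨u₁, v₁⟩ ⟨u₂, v₂⟩ h₁ h₂ heq
  simp only [fsMap] at heq
  split at heq <;> split at heq
  · rename_i hc1 hc2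
    simp only [Prod.mk.injEq] at heq ⊢
    exact ⟨hc1.1.trans hc2.1.symm, heq.2⟩
  · rename_i hc1 hc2
    exfalso
    simp only [Prod.mk.injEq] at heq
    rw [← heq.1] at h₂
    exact (hF.1 v₂).1 h₂
  · rename_i hc1 hc2
    exfalso
    simp only [Prod.mk.injEq] at heq
    rw [heq.1] at h₁
    exact (hF.1 v₁).1 h₁
  · exact heq

lemma fsMap_ne_ab {e : V × V} (hE : E e.1 e.2) : fsMap a b Out e ≠ (a, b) := by
  simp only [fsMap]
  split
  · intro h
    rw [Prod.mk.injEq] at h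
    exact hF.2.1 h.1.symm
  · intro h
    rw [h] at hE
    exact (hF.1 a).2 hE

lemma fsMap_E2 {e : V × V} (hE : E e.1 e.2) :
    E₂ (fsMap a b Out e).1 (fsMap a b Out e).2 := by
  obtain ⟨hub, hvb⟩ := fs_E_edge_not_b hF hE
  simp only [fsMap]
  split
  · rename_i hc
    exact fs_E2_bv hF hc.2
  · rename_i hc
    by_cases hua : e.1 = a
    · have hvOut : e.2 ∉ Out := fun h => hc ⟨hua, h⟩
      exact (hF.2.2.2.2.2 e.1 e.2).2 (Or.inr (Or.inr (Or.inl ⟨hua, hvOut, hvb, hua ▸ hE⟩)))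
    · exact (hF.2.2.2.2.2 e.1 e.2).2 (Or.inr (Or.inr (Or.inr ⟨hua, hub, hvb, hE⟩)))

end hF
end FSplit

section Restrict
variable {R : V → V → Prop} {p : List V} {x y : V} {D : Set (V × V)}

lemma pathFrom_restrict (hp : PathFrom R p x y) (h : ∀ e ∈ ze p, e ∉ D) :
    PathFrom (fun u v => R u v ∧ (u, v) ∉ D) p x y := by
  refine ⟨⟨(chain'_iff_ze p).2 ?_, hp.1.2⟩, hp.2⟩
  intro e he
  refine ⟨(chain'_iff_ze p).1 hp.1.1 e he, ?_⟩
  simpa using h e he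

lemma pathFrom_avoid (hp : PathFrom (fun u v => R u v ∧ (u, v) ∉ D) p x y) :
    ∀ e ∈ ze p, e ∉ D := by
  intro e he
  have := (chain'_iff_ze p).1 hp.1.1 e he
  simpa using this.2

end Restrict

section FSplit2
variable {E E₂ : V → V → Prop} {s t a b : V} {Out : Set V} {C : Set (V × V)}

lemma fs_minCut_image (hF : ForwardSplit E E₂ a b Out) (hst : s ≠ t) (hbs : b ≠ s)
    (hbt : b ≠ t) (hC : IsMinCut E s t C) :
    IsMinCut E₂ s t (fsMap a b Out '' C) := by
  have hCE : ∀ e ∈ C, E e.1 e.2 := hC.1.1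
  have hcut2 : IsCut E₂ s t (fsMap a b Out '' C) := by
    constructor
    · rintro f ⟨e, he, rfl⟩
      exact fsMap_E2 hF (hCE e he)
    · rintro ⟨q, hq⟩
      have hqE2 : PathFrom E₂ q s t := pathFrom_imp (fun u v h => h.1) hq
      have havoid : ∀ e ∈ ze q, e ∉ fsMap a b Out '' C := pathFrom_avoid hq
      have hqedge : ∀ e ∈ ze q, E₂ e.1 e.2 := (chain'_iff_ze q).1 hqE2.1.1
      obtain ⟨p, hp, hmapped⟩ :
          ∃ p, PathFrom E p s t ∧ ∀ e ∈ ze p, fsMap a b Out e ∈ ze q := by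
        by_cases hbq : b ∈ q
        · obtain ⟨q₁, q₂, rfl⟩ := List.append_of_mem hbq
          obtain ⟨z, q₁', rfl⟩ : ∃ z q₁', q₁ = z :: q₁' := by
            cases q₁ with
            | nil =>
              exfalso
              have := hqE2.2.1
              simp only [List.nil_append, List.head?_cons, Option.some_inj] at this
              exact hbs this
            | cons z q₁' => exact ⟨z, q₁', rfl⟩
          set q₁ : List V := z :: q₁' with hq₁def
          obtain ⟨y, q₂', rfl⟩ : ∃ y q₂', q₂ = y :: q₂' := by
            cases q₂ with
            | nil =>
              exfalso
              have := hqE2.2.2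
              rw [List.getLast?_append_of_ne_nil _ (by simp)] at this
              simp only [List.getLast?_singleton, Option.some_inj] at this
              exact hbt this
            | cons y q₂' => exact ⟨y, q₂', rfl⟩
          have hnd := hqE2.1.2
          rw [List.nodup_append'] at hnd
          have hbq₁ : b ∉ q₁ := fun h => hnd.2.2 h (List.mem_cons_self)
          have hbq₂ : b ∉ y :: q₂' := (List.nodup_cons.1 hnd.2.1).1
          have hch := hqE2.1.1
          rw [chain'_append] at hch
          obtain ⟨hchq₁, hchb, hlink⟩ := hch
          have hE2by : E₂ b y := (chain'_cons.1 hchb).1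
          have hchq₂ : (y :: q₂').Chain' E₂ := (chain'_cons.1 hchb).2
          have hyOut : y ∈ Out := fs_succ_b hF hE2by
          have hEay : E a y := hF.2.2.2.1 y hyOut
          obtain ⟨q₁h, xl, hq₁c⟩ : ∃ L c, q₁ = L ++ [c] := by
            rcases List.eq_nil_or_concat q₁ with h | ⟨L, c, h⟩
            · simp [hq₁def] at h
            · exact ⟨L, c, by rw [h, List.concat_eq_append]⟩
          have hlastq₁ : q₁.getLast? = some xl := by
            rw [hq₁c, List.getLast?_concat]
          have hE2xb : E₂ xl b := by
            apply hlink xl (by rw [hlastq₁]; rfl) b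
            rfl
          have hxa : xl = a := fs_pred_b hF hE2xb
          -- the contracted path
          refine ⟨q₁ ++ y :: q₂', ⟨⟨?_, ?_⟩, ?_, ?_⟩, ?_⟩
          · rw [chain'_append]
            refine ⟨?_, ?_, ?_⟩
            · rw [chain'_iff_ze]
              intro e he
              obtain ⟨h1, h2⟩ := mem_of_mem_ze he
              exact fs_E_of_E2 hF ((chain'_iff_ze _).1 hchq₁ e he)
                (fun h => hbq₁ (h ▸ h1)) (fun h => hbq₁ (h ▸ h2))
            · rw [chain'_iff_ze]
              intro e he
              obtain ⟨h1, h2⟩ := mem_of_mem_ze he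
              exact fs_E_of_E2 hF ((chain'_iff_ze _).1 hchq₂ e he)
                (fun h => hbq₂ (h ▸ h1)) (fun h => hbq₂ (h ▸ h2))
            · intro u hu v hv
              rw [hlastq₁, Option.mem_def, Option.some_inj] at hu
              rw [List.head?_cons, Option.mem_def, Option.some_inj] at hv
              rw [← hu, ← hv, hxa]
              exact hEay
          · exact ((List.sublist_cons_self b (y :: q₂')).append_left q₁).nodup hqE2.1.2
          · have := hqE2.2.1
            simpa [hq₁def] using this
          · have := hqE2.2.2
            rw [List.getLast?_append_of_ne_nil _ (by simp)] at this
            rw [List.getLast?_append_of_ne_nil _ (by simp)]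
            rw [List.getLast?_cons_cons] at this
            exact this
          · -- edge mapping
            have hzeq : ze (q₁ ++ b :: y :: q₂') =
                (ze q₁ ++ [(xl, b)]) ++ ((b, y) :: ze (y :: q₂')) := by
              rw [ze_append' q₁ b (y :: q₂'), hq₁c,
                show (q₁h ++ [xl]) ++ [b] = q₁h ++ [xl, b] by simp,
                ze_concat q₁h xl b, ze_cons_cons]
            have hzep : ze (q₁ ++ y :: q₂') =
                ze q₁ ++ ((xl, y) :: ze (y :: q₂')) := by
              rw [ze_append' q₁ y q₂', hq₁c,
                show (q₁h ++ [xl]) ++ [y] = q₁h ++ [xl, y] by simp,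
                ze_concat q₁h xl y]
              simp
            intro e he
            rw [hzep] at he
            rw [hzeq]
            rcases List.mem_append.1 he with he | he
            · have hedge : E₂ e.1 e.2 := (chain'_iff_ze _).1 hchq₁ e he
              have hmap : fsMap a b Out e = e := by
                simp only [fsMap]
                rw [if_neg]
                rintro ⟨h1, h2⟩
                exact fs_not_E2_a_out hF h2 (h1 ▸ hedge)
              rw [hmap]
              exact List.mem_append_left _ (List.mem_append_left _ he)
            · rcases List.mem_cons.1 he with rfl | he
              · have hmap : fsMap a b Out (xl, y) = (b, y) := by
                  simp only [fsMap]
                  rw [if_pos (show (xl, y).1 = a ∧ (xl, y).2 ∈ Out from ⟨hxa, hyOut⟩)]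
                rw [hmap]
                exact List.mem_append_right _ (List.mem_cons_self)
              · have hedge : E₂ e.1 e.2 := (chain'_iff_ze _).1 hchq₂ e he
                have hmap : fsMap a b Out e = e := by
                  simp only [fsMap]
                  rw [if_neg]
                  rintro ⟨h1, h2⟩
                  exact fs_not_E2_a_out hF h2 (h1 ▸ hedge)
                rw [hmap]
                exact List.mem_append_right _ (List.mem_cons_of_mem _ he)
        · refine ⟨q, ⟨⟨?_, hqE2.1.2⟩, hqE2.2⟩, ?_⟩
          · rw [chain'_iff_ze]
            intro e he
            obtain ⟨h1, h2⟩ := mem_of_mem_ze he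
            exact fs_E_of_E2 hF (hqedge e he)
              (fun h => hbq (h ▸ h1)) (fun h => hbq (h ▸ h2))
          · intro e he
            have hedge : E₂ e.1 e.2 := hqedge e he
            have hmap : fsMap a b Out e = e := by
              simp only [fsMap]
              rw [if_neg]
              rintro ⟨h1, h2⟩
              exact fs_not_E2_a_out hF h2 (h1 ▸ hedge)
            rw [hmap]
            exact he
      -- p avoids C, contradiction
      apply hC.1.2
      refine ⟨p, pathFrom_restrict hp ?_⟩
      intro e he heC
      exact havoid _ (hmapped e he) ⟨e, heC, rfl⟩
  apply isMinCut_of_witness hcut2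
  rintro f ⟨e, heC, rfl⟩
  obtain ⟨p, hp⟩ := IsMinCut.witness hC heC
  have hpE : PathFrom E p s t := pathFrom_imp (fun u v h => h.1) hp
  have hpavoid : ∀ g ∈ ze p, g ∉ C \ {e} := pathFrom_avoid hp
  have hpedge : ∀ g ∈ ze p, E g.1 g.2 := (chain'_iff_ze p).1 hpE.1.1
  have hbp : b ∉ p := by
    obtain ⟨u, v, r, hpr⟩ := pathFrom_two hpE hst
    exact fs_b_not_mem hF hpE.1.1 (by rw [hpr]; simp)
  have hqP := fsPathFrom hF hbp hpE
  refine ⟨fsPath a b Out p, pathFrom_restrict hqP ?_⟩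
  intro g hg
  rintro ⟨hgim, hgne⟩
  obtain ⟨c, hcC, hgc⟩ := hgim
  rw [Set.mem_singleton_iff] at hgne
  rcases fsPath_ze_sub hg with rfl | ⟨e', he', rfl⟩
  · exact fsMap_ne_ab hF (hCE c hcC) hgc
  · have hEe' : E e'.1 e'.2 := hpedge e' he'
    have hce' : c = e' := fsMap_injOn hF c e' (hCE c hcC) hEe' hgc
    subst hce'
    have : c ∉ C \ {e} := hpavoid c he'
    have hce : c = e := by
      by_contra hne
      exact this ⟨hcC, hne⟩
    subst hce
    exact hgne rfl

lemma fs_step (hF : ForwardSplit E E₂ a b Out) :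
    (∀ S : Finset (V × V), Parallel E s t ↑S →
      ∃ T : Finset (V × V), Parallel E₂ s t ↑T ∧ S.card ≤ T.card) ∧
    (∀ S : Finset (V × V), Serial E s t ↑S → Parallel E s t ↑S →
      ∃ T : Finset (V × V), Serial E₂ s t ↑T ∧ Parallel E₂ s t ↑T ∧ S.card ≤ T.card) := by
  classical
  have main : ∀ (C : Set (V × V)), IsMinCut E s t C → (∃ p₀, PathFrom E p₀ s t) →
      IsMinCut E₂ s t (fsMap a b Out '' C) ∧ b ∉ ({s, t} : Set V) := by
    intro C hC ⟨p₀, hp₀⟩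
    have hst : s ≠ t := IsCut.ne_st hC.1
    have hbp₀ : b ∉ p₀ := by
      obtain ⟨u, v, r, hpr⟩ := pathFrom_two hp₀ hst
      exact fs_b_not_mem hF hp₀.1.1 (by rw [hpr]; simp)
    have hbs : b ≠ s := fun h => hbp₀ (h ▸ pathFrom_head_mem hp₀)
    have hbt : b ≠ t := fun h => hbp₀ (h ▸ pathFrom_last_mem hp₀)
    exact ⟨fs_minCut_image hF hst hbs hbt hC, by simp [hbs, hbt]⟩
  constructor
  · rintro S ⟨C, hC, hSC⟩
    have hst : s ≠ t := IsCut.ne_st hC.1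
    rcases C.eq_empty_or_nonempty with rfl | hne
    · have hS : S = ∅ :=
        Finset.eq_empty_of_forall_notMem
          (fun e he => by simpa using hSC (Finset.mem_coe.2 he))
      subst hS
      obtain ⟨C₂, hC₂⟩ := exists_minCut (E := E₂) hst
      exact ⟨∅, ⟨C₂, hC₂, by simp⟩, le_rfl⟩
    · obtain ⟨hmc, _⟩ := main C hC (IsMinCut.exists_path hC hne)
      refine ⟨S.image (fsMap a b Out), ⟨fsMap a b Out '' C, hmc, ?_⟩, ?_⟩
      · rw [Finset.coe_image]
        exact Set.image_mono hSC
      · rw [Finset.card_image_of_injOn]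
        intro e₁ h₁ e₂ h₂ heq
        exact fsMap_injOn hF e₁ e₂ (hC.1.1 _ (hSC h₁)) (hC.1.1 _ (hSC h₂)) heq
  · rintro S ⟨p₀, hp₀, hS⟩ ⟨C, hC, hSC⟩
    have hst : s ≠ t := IsCut.ne_st hC.1
    obtain ⟨hmc, _⟩ := main C hC ⟨p₀, hp₀⟩
    have hbp₀ : b ∉ p₀ := by
      obtain ⟨u, v, r, hpr⟩ := pathFrom_two hp₀ hst
      exact fs_b_not_mem hF hp₀.1.1 (by rw [hpr]; simp)
    refine ⟨S.image (fsMap a b Out), ⟨fsPath a b Out p₀, fsPathFrom hF hbp₀ hp₀, ?_⟩,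
      ⟨fsMap a b Out '' C, hmc, by rw [Finset.coe_image]; exact Set.image_mono hSC⟩, ?_⟩
    · intro f hf
      rw [Finset.coe_image] at hf
      obtain ⟨e, heS, rfl⟩ := hf
      have := fsPath_ze_mem (a := a) (b := b) (Out := Out) (p := p₀) (e := e)
        (by simpa [edgeOn_iff] using hS e heS)
      simpa [edgeOn_iff] using this
    · rw [Finset.card_image_of_injOn]
      intro e₁ h₁ e₂ h₂ heq
      exact fsMap_injOn hF e₁ e₂ (hC.1.1 _ (hSC h₁)) (hC.1.1 _ (hSC h₂)) heq

end FSplit2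

section AddEdge
variable {E E₂ : V → V → Prop} {s t : V} {C : Set (V × V)}

lemma ae_minCut (a b : V) (hiff : ∀ u v, E₂ u v ↔ (E u v ∨ (u = a ∧ v = b)))
    (hC : IsMinCut E s t C) : ∃ C₂, IsMinCut E₂ s t C₂ ∧ C ⊆ C₂ := by
  classical
  have hEsub : ∀ u v, E u v → E₂ u v := fun u v h => (hiff u v).2 (Or.inl h)
  by_cases hEab : E a b
  · refine ⟨C, isMinCut_congr (fun u v => ?_) hC, subset_rfl⟩
    rw [hiff]
    constructor
    · exact Or.inl
    · rintro (h | ⟨rfl, rfl⟩)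
      · exact h
      · exact hEab
  set EC : V → V → Prop := fun u v => E u v ∧ (u, v) ∉ C with hECdef
  by_cases hpos : Relation.ReflTransGen EC s a ∧ Relation.ReflTransGen EC b t
  · -- new cut is insert (a,b) C
    obtain ⟨p₁, hp₁⟩ := reach_to_path hpos.1
    obtain ⟨p₂, hp₂⟩ := reach_to_path hpos.2
    have hdisj : p₁.Disjoint p₂ := by
      intro w hw1 hw2
      have h1 : Relation.ReflTransGen EC s w := chain'_reach_head hp₁.1.1 hp₁.2.1 hw1
      have h2 : Relation.ReflTransGen EC w t := chain'_reach_last hp₂.1.1 hw2 hp₂.2.2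
      obtain ⟨p', hp'⟩ := reach_to_path (h1.trans h2)
      exact hC.1.2 ⟨p', hp'⟩
    have hp₂ne : p₂ ≠ [] := by
      intro h
      rw [h] at hp₂
      exact absurd hp₂.2.1 (by simp)
    have hcut : IsCut E₂ s t (insert (a, b) C) := by
      constructor
      · rintro f hf
        rcases Set.mem_insert_iff.1 hf with rfl | hf
        · exact (hiff a b).2 (Or.inr ⟨rfl, rfl⟩)
        · exact hEsub _ _ (hC.1.1 f hf)
      · rintro ⟨q, hq⟩
        have havoid := pathFrom_avoid hq
        apply hC.1.2
        refine ⟨q, ⟨⟨(chain'_iff_ze q).2 ?_, hq.1.2⟩, hq.2⟩⟩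
        intro e he
        have h2 := (chain'_iff_ze q).1 hq.1.1 e he
        have hnotin := havoid e he
        have heE : E e.1 e.2 := by
          rcases (hiff e.1 e.2).1 h2.1 with h | ⟨h1, h2'⟩
          · exact h
          · exfalso
            apply hnotin
            apply Set.mem_insert_iff.2
            left
            rw [← h1, ← h2']
        exact ⟨heE, fun hmem => hnotin (Set.mem_insert_iff.2 (Or.inr (by simpa using hmem)))⟩
    refine ⟨insert (a, b) C, isMinCut_of_witness hcut ?_, Set.subset_insert _ _⟩
    intro f hf
    rcases Set.mem_insert_iff.1 hf with rfl | hfC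
    · -- witness for the new edge: p₁ ++ p₂
      refine ⟨p₁ ++ p₂, ⟨⟨?_, ?_⟩, ?_, ?_⟩⟩
      · rw [chain'_append]
        refine ⟨?_, ?_, ?_⟩
        · rw [chain'_iff_ze]
          intro e he
          have h1 : EC e.1 e.2 := (chain'_iff_ze _).1 hp₁.1.1 e he
          refine ⟨hEsub _ _ h1.1, ?_⟩
          intro hmem
          obtain ⟨hm1, hm2⟩ := hmem
          rcases Set.mem_insert_iff.1 hm1 with heq | hm
          · exact hm2 (by simpa using heq)
          · exact h1.2 hm
        · rw [chain'_iff_ze]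
          intro e he
          have h1 : EC e.1 e.2 := (chain'_iff_ze _).1 hp₂.1.1 e he
          refine ⟨hEsub _ _ h1.1, ?_⟩
          intro hmem
          obtain ⟨hm1, hm2⟩ := hmem
          rcases Set.mem_insert_iff.1 hm1 with heq | hm
          · exact hm2 (by simpa using heq)
          · exact h1.2 hm
        · intro u hu v hv
          rw [hp₁.2.2, Option.mem_def, Option.some_inj] at hu
          rw [hp₂.2.1, Option.mem_def, Option.some_inj] at hv
          subst hu; subst hv
          exact ⟨(hiff a b).2 (Or.inr ⟨rfl, rfl⟩), by simp⟩
      · exact hp₁.1.2.append hp₂.1.2 hdisj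
      · rw [List.head?_append, hp₁.2.1]
        rfl
      · rw [List.getLast?_append_of_ne_nil _ hp₂ne]
        exact hp₂.2.2
    · obtain ⟨p, hp⟩ := IsMinCut.witness hC hfC
      refine ⟨p, pathFrom_imp ?_ hp⟩
      rintro u v ⟨h1, h2⟩
      refine ⟨hEsub _ _ h1, ?_⟩
      rintro ⟨hm1, hm2⟩
      rcases Set.mem_insert_iff.1 hm1 with heq | hm
      · rw [Prod.mk.injEq] at heq
        obtain ⟨rfl, rfl⟩ := heq
        exact hEab h1
      · exact h2 ⟨hm, hm2⟩
  · -- C itself remains a minimal cut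
    have hcut : IsCut E₂ s t C := by
      refine ⟨fun e he => hEsub _ _ (hC.1.1 e he), ?_⟩
      rintro ⟨q, hq⟩
      have havoid := pathFrom_avoid hq
      have hqE2 : ∀ e ∈ ze q, E₂ e.1 e.2 := fun e he => ((chain'_iff_ze q).1 hq.1.1 e he).1
      by_cases hab_on : ((a, b) : V × V) ∈ ze q
      · obtain ⟨l₁, l₂, hdec⟩ := mem_ze_iff.1 hab_on
        simp only at hdec
        apply hpos
        have hq' : PathFrom (fun u v => E₂ u v ∧ (u, v) ∉ C) ((l₁ ++ [a]) ++ (b :: l₂)) s t := by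
          rw [show (l₁ ++ [a]) ++ (b :: l₂) = l₁ ++ a :: b :: l₂ by simp, ← hdec]
          exact hq
        have hnd : ((l₁ ++ [a]) ++ (b :: l₂)).Nodup := hq'.1.2
        rw [List.nodup_append'] at hnd
        have hbl : b ∉ l₁ ++ [a] := fun h => hnd.2.2 h (List.mem_cons_self)
        have hal : a ∉ b :: l₂ := fun h => hnd.2.2 (List.mem_append_right _ (List.mem_cons_self)) h
        have hch := hq'.1.1
        rw [chain'_append] at hch
        constructor
        · -- s reaches a
          apply chain'_reach (p := l₁ ++ [a]) ?_ ?_ (List.getLast?_concat)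
          · rw [chain'_iff_ze]
            intro e he
            obtain ⟨hm1, hm2⟩ := mem_of_mem_ze he
            have h2 := (chain'_iff_ze _).1 hch.1 e he
            refine ⟨?_, h2.2⟩
            rcases (hiff e.1 e.2).1 h2.1 with h | ⟨h1, h2'⟩
            · exact h
            · exact absurd (h2' ▸ hm2) hbl
          · have h0 := hq'.2.1
            rw [List.head?_append, List.head?_append] at h0
            rw [List.head?_append]
            cases hl : l₁.head? with
            | none => rw [hl] at h0; simpa using h0
            | some z => rw [hl] at h0; simpa using h0
        · -- b reaches t
          apply chain'_reach (p := b :: l₂) ?_ rfl ?_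
          · rw [chain'_iff_ze]
            intro e he
            obtain ⟨hm1, hm2⟩ := mem_of_mem_ze he
            have h2 := (chain'_iff_ze _).1 hch.2.1 e he
            refine ⟨?_, h2.2⟩
            rcases (hiff e.1 e.2).1 h2.1 with h | ⟨h1, h2'⟩
            · exact h
            · exact absurd (h1 ▸ hm1) hal
          · have := hq'.2.2
            rw [List.getLast?_append_of_ne_nil _ (by simp)] at this
            exact this
      · apply hC.1.2
        refine ⟨q, ⟨⟨(chain'_iff_ze q).2 ?_, hq.1.2⟩, hq.2⟩⟩
        intro e he
        have h2 := (chain'_iff_ze q).1 hq.1.1 e he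
        refine ⟨?_, h2.2⟩
        rcases (hiff e.1 e.2).1 h2.1 with h | ⟨h1, h2'⟩
        · exact h
        · exfalso
          apply hab_on
          have : e = (a, b) := by
            obtain ⟨e1, e2⟩ := e
            simp_all
          rw [← this]
          exact he
    refine ⟨C, isMinCut_of_witness hcut ?_, subset_rfl⟩
    intro f hfC
    obtain ⟨p, hp⟩ := IsMinCut.witness hC hfC
    exact ⟨p, pathFrom_imp (fun u v h => ⟨hEsub _ _ h.1, h.2⟩) hp⟩

lemma ae_step (hA : AddEdgeStep E E₂) :
    (∀ S : Finset (V × V), Parallel E s t ↑S →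
      ∃ T : Finset (V × V), Parallel E₂ s t ↑T ∧ S.card ≤ T.card) ∧
    (∀ S : Finset (V × V), Serial E s t ↑S → Parallel E s t ↑S →
      ∃ T : Finset (V × V), Serial E₂ s t ↑T ∧ Parallel E₂ s t ↑T ∧ S.card ≤ T.card) := by
  obtain ⟨a, b, _, hiff⟩ := hA
  have hEsub : ∀ u v, E u v → E₂ u v := fun u v h => (hiff u v).2 (Or.inl h)
  constructor
  · rintro S ⟨C, hC, hSC⟩
    obtain ⟨C₂, hmc, hsub⟩ := ae_minCut a b hiff hC
    exact ⟨S, ⟨C₂, hmc, hSC.trans hsub⟩, le_rfl⟩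
  · rintro S ⟨p₀, hp₀, hS⟩ ⟨C, hC, hSC⟩
    obtain ⟨C₂, hmc, hsub⟩ := ae_minCut a b hiff hC
    exact ⟨S, ⟨p₀, pathFrom_imp hEsub hp₀, hS⟩, ⟨C₂, hmc, hSC.trans hsub⟩, le_rfl⟩

end AddEdge

section Dual
variable {E E₂ : V → V → Prop} {s t a b : V} {C : Set (V × V)} {p : List V}

def flipR (E : V → V → Prop) : V → V → Prop := fun u v => E v u

lemma swap_swap_image (A : Set (V × V)) : Prod.swap '' (Prod.swap '' A) = A := by
  rw [← Set.image_comp, show Prod.swap ∘ Prod.swap = (id : V × V → V × V) from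
    funext (fun e => Prod.swap_swap e), Set.image_id]

lemma image_swap_ssubset {A B : Set (V × V)} (h : A ⊂ B) :
    Prod.swap '' A ⊂ Prod.swap '' B := by
  rw [ssubset_iff_subset_ne]
  refine ⟨Set.image_mono h.subset, fun heq => h.ne ?_⟩
  rw [← swap_swap_image A, heq, swap_swap_image]

lemma mem_ze_reverse {e : V × V} (h : e ∈ ze p) : (e.2, e.1) ∈ ze p.reverse := by
  obtain ⟨l₁, l₂, rfl⟩ := mem_ze_iff.1 h
  apply mem_ze_iff.2
  refine ⟨l₂.reverse, l₁.reverse, ?_⟩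
  simp

lemma pathFrom_reverse {R : V → V → Prop} {x y : V} (hp : PathFrom R p x y) :
    PathFrom (flipR R) p.reverse y x := by
  refine ⟨⟨?_, List.nodup_reverse.2 hp.1.2⟩, ?_, ?_⟩
  · exact chain'_reverse.2 hp.1.1
  · rw [List.head?_reverse]; exact hp.2.2
  · rw [List.getLast?_reverse]; exact hp.2.1

lemma isCut_flip (h : IsCut E s t C) : IsCut (flipR E) t s (Prod.swap '' C) := by
  constructor
  · rintro f ⟨e, he, rfl⟩
    exact h.1 e he
  · rintro ⟨p, hp⟩
    apply h.2
    have hp' := pathFrom_reverse hp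
    refine ⟨p.reverse, pathFrom_imp ?_ hp'⟩
    rintro u v ⟨h1, h2⟩
    refine ⟨h1, fun hm => h2 ⟨(u, v), hm, rfl⟩⟩

lemma isMinCut_flip (h : IsMinCut E s t C) : IsMinCut (flipR E) t s (Prod.swap '' C) := by
  refine ⟨isCut_flip h.1, ?_⟩
  intro D hss hcutD
  have hD : IsCut E s t (Prod.swap '' D) := isCut_flip (E := flipR E) (s := t) (t := s) hcutD
  apply h.2 (Prod.swap '' D) _ hD
  have := image_swap_ssubset hss
  rwa [swap_swap_image] at this

lemma parallel_flip {P : Set (V × V)} (h : Parallel E s t P) :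
    Parallel (flipR E) t s (Prod.swap '' P) := by
  obtain ⟨C, hC, hPC⟩ := h
  exact ⟨Prod.swap '' C, isMinCut_flip hC, Set.image_mono hPC⟩

lemma serial_flip {P : Set (V × V)} (h : Serial E s t P) :
    Serial (flipR E) t s (Prod.swap '' P) := by
  obtain ⟨p, hp, hE⟩ := h
  refine ⟨p.reverse, pathFrom_reverse hp, ?_⟩
  rintro f ⟨e, he, rfl⟩
  exact mem_ze_reverse (hE e he)

lemma bs_step {In : Set V} (hB : BackwardSplit E E₂ a b In) :
    (∀ S : Finset (V × V), Parallel E s t ↑S →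
      ∃ T : Finset (V × V), Parallel E₂ s t ↑T ∧ S.card ≤ T.card) ∧
    (∀ S : Finset (V × V), Serial E s t ↑S → Parallel E s t ↑S →
      ∃ T : Finset (V × V), Serial E₂ s t ↑T ∧ Parallel E₂ s t ↑T ∧ S.card ≤ T.card) := by
  classical
  have hF : ForwardSplit (flipR E) (flipR E₂) b a In := by
    obtain ⟨h1, h2, h3, h4, h5, h6⟩ := hB
    refine ⟨fun v => ⟨(h1 v).2, (h1 v).1⟩, fun h => h2 h.symm, h3, h4, h5, ?_⟩
    intro u v
    show E₂ v u ↔ _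
    rw [h6 v u]
    tauto
  obtain ⟨hPar, hSer⟩ := fs_step (s := t) (t := s) hF
  have hcard : ∀ S : Finset (V × V), (S.image Prod.swap).card = S.card :=
    fun S => Finset.card_image_of_injective S Prod.swap_injective
  have hcoe : ∀ S : Finset (V × V), ↑(S.image Prod.swap) = Prod.swap '' (↑S : Set (V × V)) :=
    fun S => Finset.coe_image
  constructor
  · rintro S hS
    obtain ⟨T, hT, hle⟩ := hPar (S.image Prod.swap) (by rw [hcoe]; exact parallel_flip hS)
    refine ⟨T.image Prod.swap, ?_, ?_⟩
    · rw [hcoe]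
      exact parallel_flip (E := flipR E₂) (s := t) (t := s) hT
    · rw [hcard]
      rw [hcard] at hle
      exact hle
  · rintro S hSer' hPar'
    obtain ⟨T, hT1, hT2, hle⟩ := hSer (S.image Prod.swap)
      (by rw [hcoe]; exact serial_flip hSer') (by rw [hcoe]; exact parallel_flip hPar')
    refine ⟨T.image Prod.swap, ?_, ?_, ?_⟩
    · rw [hcoe]
      exact serial_flip (E := flipR E₂) (s := t) (t := s) hT1
    · rw [hcoe]
      exact parallel_flip (E := flipR E₂) (s := t) (t := s) hT2
    · rw [hcard]
      rw [hcard] at hle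
      exact hle

end Dual

end Work

/-- If `G'` is d-embedded in `G`, then `PW(G) ≥ PW(G')` and `SPW(G) ≥ SPW(G')`. -/
theorem stmt12 {V : Type*} (E' E : V → V → Prop) (s t : V)
    (hG' : TwoTerminalE E' s t) (hG : TwoTerminalE E s t)
    (hemb : DEmbedded s t E' E) :
    (∀ S : Finset (V × V), Parallel E' s t ↑S →
      ∃ T : Finset (V × V), Parallel E s t ↑T ∧ S.card ≤ T.card) ∧
    (∀ S : Finset (V × V), Serial E' s t ↑S → Parallel E' s t ↑S →
      ∃ T : Finset (V × V), Serial E s t ↑T ∧ Parallel E s t ↑T ∧ S.card ≤ T.card) := by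
  have step : ∀ F F₂ : V → V → Prop, DEmbedStep s t F F₂ →
      ((∀ S : Finset (V × V), Parallel F s t ↑S →
        ∃ T : Finset (V × V), Parallel F₂ s t ↑T ∧ S.card ≤ T.card) ∧
      (∀ S : Finset (V × V), Serial F s t ↑S → Parallel F s t ↑S →
        ∃ T : Finset (V × V), Serial F₂ s t ↑T ∧ Parallel F₂ s t ↑T ∧ S.card ≤ T.card)) := by
    intro F F₂ h
    rcases h with h | ⟨a, b, Out, _, hFp⟩ | ⟨a, b, In, _, hBp⟩
    · exact Work.ae_step h
    · exact Work.fs_step hFp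
    · exact Work.bs_step hBp
  clear hG hG'
  induction hemb with
  | refl => exact ⟨fun S hS => ⟨S, hS, le_rfl⟩, fun S h1 h2 => ⟨S, h1, h2, le_rfl⟩⟩
  | tail hemb' hstep ih =>
    obtain ⟨ih1, ih2⟩ := ih
    obtain ⟨st1, st2⟩ := step _ _ hstep
    constructor
    · intro S hS
      obtain ⟨T, hT, hle⟩ := ih1 S hS
      obtain ⟨T₂, hT₂, hle₂⟩ := st1 T hT
      exact ⟨T₂, hT₂, hle.trans hle₂⟩
    · intro S h1 h2
      obtain ⟨T, hT1, hT2, hle⟩ := ih2 S h1 h2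
      obtain ⟨T₂, hU1, hU2, hle₂⟩ := st2 T hT1 hT2
      exact ⟨T₂, hU1, hU2, hle.trans hle₂⟩
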